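/- Let s > 0, T > 0, 0 ≤ t ≤ T, η_max > 0, ζ_0 ≥ 0, and let f, h : ℝ → ℂ be measurable with δ := (∫_{|η|>η_max} (1+η²)^s |f(η)|² dη)^{1/2} < ∞ and (∫_ℝ |h(η) - e^{-η²T} f(η)|² dη)^{1/2} ≤ ζ_0. Let χ(η) = 1 for |η| ≤ η_max and χ(η) = 0 otherwise. Then (∫_ℝ | e^{-η²t} f(η) - e^{η²(T-t)} h(η) χ(η) |² dη)^{1/2} ≤ e^{-η_max² t} δ / η_max^s + e^{η_max²(T-t)} ζ_0, and in particular this is at most δ / η_max^s + e^{η_max² T} ζ_0. -/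

import Mathlib

open MeasureTheory
open scoped ENNReal NNReal

lemma eLpNorm_two_eq_sqrt {α : Type*} {m : MeasurableSpace α} {μ : Measure α}
    {E : Type*} [NormedAddCommGroup E] {g : α → E} (hg : MemLp g 2 μ) :
    eLpNorm g 2 μ = ENNReal.ofReal (Real.sqrt (∫ a, ‖g a‖ ^ 2 ∂μ)) := by
  rw [hg.eLpNorm_eq_integral_rpow_norm two_ne_zero ENNReal.ofNat_ne_top]
  congr 1
  rw [Real.sqrt_eq_rpow]
  norm_num

set_option maxHeartbeats 1000000 in

/-- Theorem 3.2 of the paper (Fourier-side form): recovery error with noisy final data.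
`f` is the Fourier transform of the initial data `u₀`, `h` that of the noisy measured
final data `u_T^ζ`; `e^{-η²t} f(η)` is the exact solution and `e^{η²(T-t)} h(η) χ(η)`
the truncated approximation reconstructed from the noisy data. -/
theorem backward_heat_noisy_recovery_error
    (s T t ηmax ζ0 : ℝ) (hs : 0 < s) (hT : 0 < T) (ht0 : 0 ≤ t) (htT : t ≤ T)
    (hηmax : 0 < ηmax) (hζ0 : 0 ≤ ζ0)
    (f h : ℝ → ℂ) (hf : Measurable f) (hh : Measurable h)
    (hfin : IntegrableOn (fun η : ℝ => (1 + η ^ 2) ^ s * ‖f η‖ ^ 2)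
      {η : ℝ | ηmax < |η|})
    (δ : ℝ)
    (hδ : δ = Real.sqrt (∫ η in {η : ℝ | ηmax < |η|}, (1 + η ^ 2) ^ s * ‖f η‖ ^ 2))
    (hnoise_int : Integrable (fun η : ℝ => ‖h η - (Real.exp (-η ^ 2 * T) : ℂ) * f η‖ ^ 2))
    (hnoise : Real.sqrt (∫ η : ℝ, ‖h η - (Real.exp (-η ^ 2 * T) : ℂ) * f η‖ ^ 2) ≤ ζ0)
    (χ : ℝ → ℂ) (hχ : ∀ η, χ η = if |η| ≤ ηmax then 1 else 0) :
    Real.sqrt (∫ η : ℝ,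
        ‖(Real.exp (-η ^ 2 * t) : ℂ) * f η
          - (Real.exp (η ^ 2 * (T - t)) : ℂ) * h η * χ η‖ ^ 2) ≤
      Real.exp (-ηmax ^ 2 * t) * δ / ηmax ^ s + Real.exp (ηmax ^ 2 * (T - t)) * ζ0 ∧
    Real.sqrt (∫ η : ℝ,
        ‖(Real.exp (-η ^ 2 * t) : ℂ) * f η
          - (Real.exp (η ^ 2 * (T - t)) : ℂ) * h η * χ η‖ ^ 2) ≤
      δ / ηmax ^ s + Real.exp (ηmax ^ 2 * T) * ζ0 := by
  set S : Set ℝ := {η : ℝ | ηmax < |η|} with hSdef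
  have hS : MeasurableSet S := measurableSet_lt measurable_const _root_.measurable_abs
  set g : ℝ → ℂ := fun η => (Real.exp (-η ^ 2 * t) : ℂ) * f η
          - (Real.exp (η ^ 2 * (T - t)) : ℂ) * h η * χ η with hgdef
  set nz : ℝ → ℂ := fun η => h η - (Real.exp (-η ^ 2 * T) : ℂ) * f η with hnzdef
  set G : ℝ → ℝ := S.indicator (fun η => Real.sqrt ((1 + η ^ 2) ^ s) * ‖f η‖) with hGdef
  set c1 : ℝ := Real.exp (ηmax ^ 2 * (T - t)) with hc1def
  set c2 : ℝ := Real.exp (-ηmax ^ 2 * t) / ηmax ^ s with hc2def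
  have hps : (0:ℝ) < ηmax ^ s := Real.rpow_pos_of_pos hηmax s
  have hc2pos : 0 < c2 := by positivity
  have hc1pos : 0 < c1 := Real.exp_pos _
  have hδ0 : 0 ≤ δ := hδ ▸ Real.sqrt_nonneg _
  -- measurability
  have hχm : Measurable χ := by
    have : χ = fun η => if |η| ≤ ηmax then (1:ℂ) else 0 := funext hχ
    rw [this]
    exact Measurable.ite (measurableSet_le _root_.measurable_abs measurable_const)
      measurable_const measurable_const
  have hgm : Measurable g := by
    apply Measurable.sub
    · exact (Complex.measurable_ofReal.comp (by fun_prop)).mul hf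
    · exact ((Complex.measurable_ofReal.comp (by fun_prop)).mul hh).mul hχm
  have hnzm : Measurable nz := by
    exact hh.sub ((Complex.measurable_ofReal.comp (by fun_prop)).mul hf)
  have hGm : Measurable G := by
    apply Measurable.indicator _ hS
    exact (Real.continuous_sqrt.measurable.comp (by fun_prop)).mul hf.norm
  -- MemLp facts
  have memnz : MemLp nz 2 (volume : Measure ℝ) :=
    (memLp_two_iff_integrable_sq_norm hnzm.aestronglyMeasurable).mpr hnoise_int
  have hGsq : (fun η => ‖G η‖ ^ 2) = S.indicator (fun η : ℝ => (1 + η ^ 2) ^ s * ‖f η‖ ^ 2) := by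
    funext η
    by_cases hmem : η ∈ S
    · have h1 : (0:ℝ) ≤ (1 + η ^ 2) ^ s := Real.rpow_nonneg (by positivity) s
      simp only [hGdef, Set.indicator_of_mem hmem, Real.norm_eq_abs]
      rw [abs_of_nonneg (by positivity), mul_pow, Real.sq_sqrt h1]
    · simp [hGdef, Set.indicator_of_notMem hmem]
  have memG : MemLp G 2 (volume : Measure ℝ) := by
    rw [memLp_two_iff_integrable_sq_norm hGm.aestronglyMeasurable, hGsq]
    exact hfin.integrable_indicator hS
  have hGint : ∫ η, ‖G η‖ ^ 2 = ∫ η in S, (1 + η ^ 2) ^ s * ‖f η‖ ^ 2 := by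
    rw [hGsq, integral_indicator hS]
  have heG : eLpNorm G 2 (volume : Measure ℝ) = ENNReal.ofReal δ := by
    rw [eLpNorm_two_eq_sqrt memG, hGint, hδ]
  -- pointwise bounds
  have hb2 : ∀ η, ‖S.indicator g η‖ ≤ ‖(c2 • G) η‖ := by
    intro η
    by_cases hmem : η ∈ S
    · have hmem' : ηmax < |η| := hmem
      have hχ0 : χ η = 0 := by rw [hχ]; simp [not_le.mpr hmem']
      have hsq : ηmax ^ 2 ≤ η ^ 2 := by nlinarith [abs_nonneg η, sq_abs η]
      have hexp : Real.exp (-η ^ 2 * t) ≤ Real.exp (-ηmax ^ 2 * t) :=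
        Real.exp_le_exp.mpr (by nlinarith)
      have hpow : ηmax ^ s ≤ Real.sqrt ((1 + η ^ 2) ^ s) := by
        have h1 : (ηmax ^ 2 : ℝ) ^ s ≤ (1 + η ^ 2) ^ s :=
          Real.rpow_le_rpow (by positivity) (by nlinarith) hs.le
        have h2 : Real.sqrt ((ηmax ^ 2 : ℝ) ^ s) = ηmax ^ s := by
          rw [← Real.rpow_natCast ηmax 2, ← Real.rpow_mul hηmax.le,
            Real.sqrt_eq_rpow, ← Real.rpow_mul hηmax.le]
          congr 1
          push_cast
          ring
        calc ηmax ^ s = Real.sqrt ((ηmax ^ 2 : ℝ) ^ s) := h2.symm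
          _ ≤ _ := Real.sqrt_le_sqrt h1
      have hGη : G η = Real.sqrt ((1 + η ^ 2) ^ s) * ‖f η‖ := Set.indicator_of_mem hmem _
      rw [Set.indicator_of_mem hmem]
      simp only [Pi.smul_apply, smul_eq_mul, hGη, hgdef, hχ0, mul_zero, sub_zero,
        Real.norm_eq_abs, norm_mul, Complex.norm_real, Real.abs_exp]
      rw [abs_of_nonneg (by positivity : (0:ℝ) ≤ c2), abs_of_nonneg (Real.sqrt_nonneg _),
        abs_of_nonneg (norm_nonneg _)]
      have key : Real.exp (-η ^ 2 * t) ≤ c2 * Real.sqrt ((1 + η ^ 2) ^ s) := by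
        rw [hc2def, div_mul_eq_mul_div, le_div_iff₀ hps]
        calc Real.exp (-η ^ 2 * t) * ηmax ^ s
            ≤ Real.exp (-ηmax ^ 2 * t) * Real.sqrt ((1 + η ^ 2) ^ s) :=
          mul_le_mul hexp hpow (by positivity) (Real.exp_pos _).le
          _ = _ := by ring
      calc Real.exp (-η ^ 2 * t) * ‖f η‖ ≤ (c2 * Real.sqrt ((1 + η ^ 2) ^ s)) * ‖f η‖ :=
            mul_le_mul_of_nonneg_right key (norm_nonneg _)
        _ = c2 * (Real.sqrt ((1 + η ^ 2) ^ s) * ‖f η‖) := by ring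
    · simp [Set.indicator_of_notMem hmem, hGdef]
  have hb1 : ∀ η, ‖Sᶜ.indicator g η‖ ≤ ‖(c1 • nz) η‖ := by
    intro η
    by_cases hmem : η ∈ S
    · rw [Set.indicator_of_notMem (Set.notMem_compl_iff.mpr hmem)]
      simp only [norm_zero]
      positivity
    · have habs : |η| ≤ ηmax := not_lt.mp hmem
      have hχ1 : χ η = 1 := by rw [hχ]; simp [habs]
      have hexpsplit : Real.exp (-η ^ 2 * t)
          = Real.exp (η ^ 2 * (T - t)) * Real.exp (-η ^ 2 * T) := by
        rw [← Real.exp_add]; ring_nf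
      have hgη : g η = -((Real.exp (η ^ 2 * (T - t)) : ℂ) * nz η) := by
        simp only [hgdef, hnzdef, hχ1, mul_one, hexpsplit]
        push_cast
        ring
      have hsq : η ^ 2 ≤ ηmax ^ 2 := by nlinarith [abs_nonneg η, sq_abs η]
      have hexp : Real.exp (η ^ 2 * (T - t)) ≤ c1 :=
        Real.exp_le_exp.mpr (by nlinarith)
      rw [Set.indicator_of_mem (Set.mem_compl hmem), hgη]
      simp only [Pi.smul_apply, norm_neg, norm_smul, norm_mul, Complex.norm_real,
        Real.norm_eq_abs, Real.abs_exp]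
      rw [abs_of_nonneg hc1pos.le]
      exact mul_le_mul_of_nonneg_right hexp (norm_nonneg _)
  -- MemLp of pieces
  have memg2 : MemLp (S.indicator g) 2 (volume : Measure ℝ) :=
    MemLp.of_le (memG.const_smul c2) ((hgm.indicator hS).aestronglyMeasurable)
      (ae_of_all _ hb2)
  have memg1 : MemLp (Sᶜ.indicator g) 2 (volume : Measure ℝ) :=
    MemLp.of_le (memnz.const_smul c1) ((hgm.indicator hS.compl).aestronglyMeasurable)
      (ae_of_all _ hb1)
  have hsplit : S.indicator g + Sᶜ.indicator g = g := Set.indicator_self_add_compl S g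
  have memg : MemLp g 2 (volume : Measure ℝ) := by
    rw [← hsplit]; exact memg2.add memg1
  -- main estimate in ℝ≥0∞
  have hmain : eLpNorm g 2 (volume : Measure ℝ)
      ≤ ENNReal.ofReal (c2 * δ) + ENNReal.ofReal (c1 * ζ0) := by
    calc eLpNorm g 2 volume = eLpNorm (S.indicator g + Sᶜ.indicator g) 2 volume := by
          rw [hsplit]
      _ ≤ eLpNorm (S.indicator g) 2 volume + eLpNorm (Sᶜ.indicator g) 2 volume :=
          eLpNorm_add_le ((hgm.indicator hS).aestronglyMeasurable)
            ((hgm.indicator hS.compl).aestronglyMeasurable) one_le_two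
      _ ≤ eLpNorm (c2 • G) 2 volume + eLpNorm (c1 • nz) 2 volume :=
          add_le_add (eLpNorm_mono hb2) (eLpNorm_mono hb1)
      _ = ‖c2‖ₑ * eLpNorm G 2 volume + ‖c1‖ₑ * eLpNorm nz 2 volume := by
          rw [eLpNorm_const_smul, eLpNorm_const_smul]
      _ ≤ ENNReal.ofReal (c2 * δ) + ENNReal.ofReal (c1 * ζ0) := by
          apply add_le_add
          · rw [heG, Real.enorm_eq_ofReal hc2pos.le, ← ENNReal.ofReal_mul hc2pos.le]
          · rw [eLpNorm_two_eq_sqrt memnz, Real.enorm_eq_ofReal hc1pos.le,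
              ← ENNReal.ofReal_mul hc1pos.le]
            exact ENNReal.ofReal_le_ofReal (mul_le_mul_of_nonneg_left hnoise hc1pos.le)
  have hreal : Real.sqrt (∫ η : ℝ, ‖g η‖ ^ 2) ≤ c2 * δ + c1 * ζ0 := by
    have := hmain
    rw [eLpNorm_two_eq_sqrt memg, ← ENNReal.ofReal_add (by positivity) (by positivity)] at this
    exact (ENNReal.ofReal_le_ofReal_iff (by positivity)).mp this
  have hfirst : Real.sqrt (∫ η : ℝ, ‖g η‖ ^ 2)
      ≤ Real.exp (-ηmax ^ 2 * t) * δ / ηmax ^ s + Real.exp (ηmax ^ 2 * (T - t)) * ζ0 := by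
    calc Real.sqrt (∫ η : ℝ, ‖g η‖ ^ 2) ≤ c2 * δ + c1 * ζ0 := hreal
      _ = Real.exp (-ηmax ^ 2 * t) * δ / ηmax ^ s + Real.exp (ηmax ^ 2 * (T - t)) * ζ0 := by
          rw [hc2def, hc1def]; ring
  refine ⟨hfirst, hfirst.trans ?_⟩
  have h1 : Real.exp (-ηmax ^ 2 * t) ≤ 1 := Real.exp_le_one_iff.mpr (by nlinarith)
  have h2 : Real.exp (ηmax ^ 2 * (T - t)) ≤ Real.exp (ηmax ^ 2 * T) :=
    Real.exp_le_exp.mpr (by nlinarith)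
  apply add_le_add
  · rw [div_le_div_iff₀ hps hps]
    nlinarith [mul_le_of_le_one_left hδ0 h1]
  · exact mul_le_mul_of_nonneg_right h2 hζ0
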